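/- arXiv:1504.02394 — 3 statements merged into one kernel-verified Lean document; each statement's English description precedes it below -/
import Mathlib

section
/- Let G be a Lie group acting smoothly on M via ρ, with f : N → M smooth, and set F : G × N → M, F(g,p) = g·f(p). If F is a submersion at every point of the form (e, p) with p ∈ N (e the identity of G), then F is a submersion at every point (g, p) of G × N. -/
open Manifold

/-- Let `G` be a Lie group acting smoothly on `M` via `ρ`, let `f : N → M`
be smooth, and set `F : G × N → M`, `F (g, p) = g • f p`.  If `F` is a submersion at every
point of the form `(1, p)` with `p : N` (`1` the identity of `G`), then `F` is a submersion
at every point `(g, p)` of `G × N`. -/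
theorem submersion_everywhere_of_submersion_at_identity
    {EG HG : Type*} [NormedAddCommGroup EG] [NormedSpace ℝ EG] [TopologicalSpace HG]
    (IG : ModelWithCorners ℝ EG HG)
    {G : Type*} [TopologicalSpace G] [ChartedSpace HG G] [Group G] [LieGroup IG (⊤ : ℕ∞) G]
    {EM HM : Type*} [NormedAddCommGroup EM] [NormedSpace ℝ EM] [TopologicalSpace HM]
    (IM : ModelWithCorners ℝ EM HM)
    {M : Type*} [TopologicalSpace M] [ChartedSpace HM M] [IsManifold IM (⊤ : ℕ∞) M]
    {EN HN : Type*} [NormedAddCommGroup EN] [NormedSpace ℝ EN] [TopologicalSpace HN]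
    (IN : ModelWithCorners ℝ EN HN)
    {N : Type*} [TopologicalSpace N] [ChartedSpace HN N] [IsManifold IN (⊤ : ℕ∞) N]
    [MulAction G M]
    (hρ : ContMDiff (IG.prod IM) IM (⊤ : ℕ∞) (fun p : G × M => p.1 • p.2))
    (f : N → M) (hf : ContMDiff IN IM (⊤ : ℕ∞) f)
    (h : ∀ p : N,
      Function.Surjective
        (mfderiv (IG.prod IN) IM (fun p : G × N => p.1 • f p.2) ((1 : G), p))) :
    ∀ q : G × N,
      Function.Surjective (mfderiv (IG.prod IN) IM (fun p : G × N => p.1 • f p.2) q) := by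
  rintro ⟨g, p⟩
  set F : G × N → M := fun p : G × N => p.1 • f p.2 with hFdef
  have hF : ContMDiff ((IG.prod IN)) IM (⊤ : ℕ∞) F :=
    hρ.comp (contMDiff_fst.prodMk (hf.comp contMDiff_snd))
  have hψ : ∀ a : G, ContMDiff IM IM (⊤ : ℕ∞) (fun x : M => a • x) := fun a =>
    hρ.comp (contMDiff_const.prodMk contMDiff_id)
  have hψsurj : ∀ (a : G) (x : M),
      Function.Surjective (mfderiv IM IM (fun y : M => a • y) x) := by
    intro a x
    have hid : (fun y : M => a • y) ∘ (fun y : M => a⁻¹ • y) = id := by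
      funext y; simp [smul_smul]
    have h1 : mfderiv IM IM ((fun y : M => a • y) ∘ (fun y : M => a⁻¹ • y)) (a • x)
        = (mfderiv IM IM (fun y : M => a • y) (a⁻¹ • (a • x))).comp
          (mfderiv IM IM (fun y : M => a⁻¹ • y) (a • x)) :=
      mfderiv_comp _ ((hψ a).mdifferentiableAt (by simp)) ((hψ a⁻¹).mdifferentiableAt (by simp))
    rw [hid, mfderiv_id, inv_smul_smul] at h1
    intro v
    refine ⟨mfderiv IM IM (fun y : M => a⁻¹ • y) (a • x) v, ?_⟩
    have := congrArg (fun L : TangentSpace IM (a • x) →L[ℝ] TangentSpace IM (a • x) => L v) h1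
    exact this.symm
  have hφ : ∀ a : G, ContMDiff ((IG.prod IN)) ((IG.prod IN)) (⊤ : ℕ∞)
      (fun q : G × N => (a * q.1, q.2)) := fun a =>
    (contMDiff_const.mul contMDiff_fst).prodMk contMDiff_snd
  have hφsurj : Function.Surjective
      (mfderiv ((IG.prod IN)) ((IG.prod IN)) (fun q : G × N => (g⁻¹ * q.1, q.2)) (g, p)) := by
    have hid : (fun q : G × N => (g⁻¹ * q.1, q.2)) ∘ (fun q : G × N => (g * q.1, q.2)) = id := by
      funext q; simp
    have h1 : mfderiv ((IG.prod IN)) ((IG.prod IN))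
        ((fun q : G × N => (g⁻¹ * q.1, q.2)) ∘ (fun q : G × N => (g * q.1, q.2))) ((1 : G), p)
        = (mfderiv ((IG.prod IN)) ((IG.prod IN)) (fun q : G × N => (g⁻¹ * q.1, q.2))
            (g * (1 : G), p)).comp
          (mfderiv ((IG.prod IN)) ((IG.prod IN)) (fun q : G × N => (g * q.1, q.2)) ((1 : G), p)) :=
      mfderiv_comp _ ((hφ g⁻¹).mdifferentiableAt (by simp)) ((hφ g).mdifferentiableAt (by simp))
    rw [hid, mfderiv_id, mul_one] at h1
    intro v
    refine ⟨mfderiv ((IG.prod IN)) ((IG.prod IN)) (fun q : G × N => (g * q.1, q.2)) ((1:G), p) v, ?_⟩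
    have := congrArg
      (fun L : TangentSpace (IG.prod IN) ((1:G), p) →L[ℝ] TangentSpace (IG.prod IN) ((1:G), p)
        => L v) h1
    exact this.symm
  have key : F = (fun x : M => g • x) ∘ (F ∘ (fun q : G × N => (g⁻¹ * q.1, q.2))) := by
    funext q
    simp only [hFdef, Function.comp_apply, smul_smul, mul_inv_cancel_left]
  have hcomp1 : mfderiv ((IG.prod IN)) IM
        ((fun x : M => g • x) ∘ (F ∘ (fun q : G × N => (g⁻¹ * q.1, q.2)))) (g, p)
      = (mfderiv IM IM (fun x : M => g • x)
          ((F ∘ (fun q : G × N => (g⁻¹ * q.1, q.2))) (g, p))).comp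
        (mfderiv ((IG.prod IN)) IM (F ∘ (fun q : G × N => (g⁻¹ * q.1, q.2))) (g, p)) :=
    mfderiv_comp _ ((hψ g).mdifferentiableAt (by simp))
      ((hF.comp (hφ g⁻¹)).mdifferentiableAt (by simp))
  have hcomp2 : mfderiv ((IG.prod IN)) IM (F ∘ (fun q : G × N => (g⁻¹ * q.1, q.2))) (g, p)
      = (mfderiv ((IG.prod IN)) IM F ((g⁻¹ * g, p) : G × N)).comp
        (mfderiv ((IG.prod IN)) ((IG.prod IN)) (fun q : G × N => (g⁻¹ * q.1, q.2)) (g, p)) :=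
    mfderiv_comp _ (hF.mdifferentiableAt (by simp)) ((hφ g⁻¹).mdifferentiableAt (by simp))
  have goal_eq : mfderiv ((IG.prod IN)) IM F (g, p)
      = mfderiv ((IG.prod IN)) IM
          ((fun x : M => g • x) ∘ (F ∘ (fun q : G × N => (g⁻¹ * q.1, q.2)))) (g, p) := by
    conv_lhs => rw [key]
  rw [goal_eq, hcomp1, hcomp2]
  have hBsurj : Function.Surjective
      (mfderiv ((IG.prod IN)) IM F ((g⁻¹ * g, p) : G × N)) := by
    have hpt : ((g⁻¹ * g : G), p) = ((1 : G), p) := by rw [inv_mul_cancel]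
    rw [hpt]; exact h p
  intro v
  obtain ⟨w, hw⟩ := hψsurj g ((F ∘ (fun q : G × N => (g⁻¹ * q.1, q.2))) (g, p)) v
  obtain ⟨u, hu⟩ := hBsurj w
  obtain ⟨z, hz⟩ := hφsurj u
  refine ⟨z, ?_⟩
  show (mfderiv IM IM (fun x : M => g • x)
      ((F ∘ (fun q : G × N => (g⁻¹ * q.1, q.2))) (g, p)))
    ((mfderiv ((IG.prod IN)) IM F ((g⁻¹ * g, p) : G × N))
      ((mfderiv ((IG.prod IN)) ((IG.prod IN)) (fun q : G × N => (g⁻¹ * q.1, q.2)) (g, p)) z)) = v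
  rw [hz, hu, hw]
end

section
/- Let Y ↪ Z be a relatively T1 embedding of topological spaces: for every open U ⊆ Y and every z ∈ Z \ U there exists an open W ⊆ Z with U ⊆ W and z ∉ W. If a compact subset K ⊆ Z is contained in the union of an increasing sequence of subspaces each of whose inclusions into the next is relatively T1, with Z the colimit, then K is contained in some finite stage. -/
/-- An inclusion of subspaces `A ⊆ B` (of an ambient space `Z`) is relatively T1 if for
every subset `U ⊆ A` which is open in `A` and every `z ∈ B \ U`, there is a subset
`W ⊆ B`, open in `B`, with `U ⊆ W` and `z ∉ W`. -/
def RelativelyT1Incl {Z : Type*} [TopologicalSpace Z] (A B : Set Z) : Prop :=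
  ∀ U ⊆ A, IsOpen ((↑·) ⁻¹' U : Set A) →
    ∀ z ∈ B \ U, ∃ W ⊆ B, IsOpen ((↑·) ⁻¹' W : Set B) ∧ U ⊆ W ∧ z ∉ W

open Set

/-- If `W` is relatively open in `Q` and `P ⊆ Q`, then `W` is relatively open in `P`. -/
lemma aux_open_of_subset {Z : Type*} [TopologicalSpace Z] {P Q W : Set Z} (hPQ : P ⊆ Q)
    (hW : IsOpen ((↑·) ⁻¹' W : Set Q)) : IsOpen ((↑·) ⁻¹' W : Set P) := by
  obtain ⟨O, hO, hOW⟩ := isOpen_induced_iff.mp hW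
  have hkey : ((↑·) ⁻¹' W : Set P) = ((↑·) ⁻¹' O : Set P) := by
    ext ⟨p, hp⟩
    have := Set.ext_iff.mp hOW ⟨p, hPQ hp⟩
    simpa using this.symm
  rw [hkey]
  exact hO.preimage continuous_subtype_val

/-- Chain construction: starting from `A m` (assumed to meet `S` only inside `F`),
build an increasing chain of relatively open sets, each meeting `S` only inside `F`. -/
lemma aux_chain {Z : Type*} [TopologicalSpace Z] (A : ℕ → Set Z) (hmono : Monotone A)
    (hrelT1 : ∀ n, RelativelyT1Incl (A n) (A (n + 1))) (S F : Set Z)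
    (hSA : ∀ p, ((S ∩ A p) \ F).Finite) (m : ℕ) (hm : A m ∩ S ⊆ F) :
    ∃ W : ℕ → Set Z, W 0 = A m ∧ ∀ k, W k ⊆ A (m + k) ∧
      IsOpen ((↑·) ⁻¹' (W k) : Set (A (m + k))) ∧ W k ⊆ W (k + 1) ∧ W k ∩ S ⊆ F := by
  have step : ∀ n (W : Set Z), W ⊆ A n → IsOpen ((↑·) ⁻¹' W : Set (A n)) → W ∩ S ⊆ F →
      ∃ W' : Set Z, (W' ⊆ A (n+1) ∧ IsOpen ((↑·) ⁻¹' W' : Set (A (n+1))) ∧ W' ∩ S ⊆ F)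
        ∧ W ⊆ W' := by
    intro n W hWA hWo hWS
    have hBfin : ((S ∩ A (n+1)) \ F).Finite := hSA (n+1)
    have hchoice : ∀ b ∈ (S ∩ A (n+1)) \ F, ∃ V ⊆ A (n+1),
        IsOpen ((↑·) ⁻¹' V : Set (A (n+1))) ∧ W ⊆ V ∧ b ∉ V := by
      intro b hb
      have hbW : b ∉ W := fun hbW => hb.2 (hWS ⟨hbW, hb.1.1⟩)
      exact hrelT1 n W hWA hWo b ⟨hb.1.2, hbW⟩
    choose! V hV1 hV2 hV3 hV4 using hchoice
    refine ⟨A (n+1) ∩ ⋂ b ∈ (S ∩ A (n+1)) \ F, V b, ⟨inter_subset_left, ?_, ?_⟩, ?_⟩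
    · have hEq : ((↑·) ⁻¹' (A (n+1) ∩ ⋂ b ∈ (S ∩ A (n+1)) \ F, V b) : Set (A (n+1)))
          = ⋂ b ∈ (S ∩ A (n+1)) \ F, ((↑·) ⁻¹' (V b) : Set (A (n+1))) := by
        ext a
        simp [a.2]
      rw [hEq]
      exact hBfin.isOpen_biInter fun b hb => hV2 b hb
    · rintro s ⟨⟨hsA1, hsV⟩, hsS⟩
      by_contra hsF
      have hsB : s ∈ (S ∩ A (n+1)) \ F := ⟨⟨hsS, hsA1⟩, hsF⟩
      exact hV4 s hsB (mem_iInter₂.mp hsV s hsB)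
    · exact subset_inter (hWA.trans (hmono (Nat.le_succ n)))
        (subset_iInter₂ fun b hb => hV3 b hb)
  choose g hg1 hg2 using step
  have hAm0 : IsOpen ((↑·) ⁻¹' (A m) : Set (A m)) := by
    rw [Subtype.coe_preimage_self]; exact isOpen_univ
  let f : ∀ k, {W : Set Z // W ⊆ A (m + k) ∧ IsOpen ((↑·) ⁻¹' W : Set (A (m + k)))
      ∧ W ∩ S ⊆ F} := fun k =>
    Nat.rec ⟨A m, subset_rfl, hAm0, hm⟩
      (fun k prev => ⟨g (m + k) prev.1 prev.2.1 prev.2.2.1 prev.2.2.2,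
        hg1 (m + k) prev.1 prev.2.1 prev.2.2.1 prev.2.2.2⟩) k
  refine ⟨fun k => (f k).1, rfl, fun k => ⟨(f k).2.1, (f k).2.2.1, ?_, (f k).2.2.2⟩⟩
  exact hg2 (m + k) (f k).1 (f k).2.1 (f k).2.2.1 (f k).2.2.2

/-- Let `Z` be the colimit (increasing union with the final topology) of
an increasing sequence of subspaces `A 0 ⊆ A 1 ⊆ ⋯` such that each inclusion
`A n ⊆ A (n+1)` is relatively T1.  Then every compact subset `K ⊆ Z` is contained in some
finite stage `A n`. -/
theorem compact_subset_finite_stage_of_relativelyT1_filtration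
    {Z : Type*} [TopologicalSpace Z] (A : ℕ → Set Z)
    (hmono : Monotone A) (hunion : (⋃ n, A n) = Set.univ)
    (hfinal : ∀ U : Set Z, IsOpen U ↔ ∀ n, IsOpen ((↑·) ⁻¹' U : Set (A n)))
    (hrelT1 : ∀ n, RelativelyT1Incl (A n) (A (n + 1)))
    (K : Set Z) (hK : IsCompact K) :
    ∃ n, K ⊆ A n := by
  by_contra hcon
  push_neg at hcon
  have hx : ∀ n, ∃ z ∈ K, z ∉ A n := fun n => Set.not_subset.mp (hcon n)
  choose x hxK hxA using hx
  set S := Set.range x with hSdef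
  -- every element of `S ∩ A p` is some `x k` with `k < p`
  have hstage : ∀ p, S ∩ A p ⊆ x '' Set.Iio p := by
    rintro p s ⟨⟨k, rfl⟩, hsA⟩
    refine ⟨k, Set.mem_Iio.mpr ?_, rfl⟩
    by_contra hk
    exact hxA k (hmono (Nat.le_of_not_lt hk) hsA)
  have hfinP : ∀ p (F : Set Z), ((S ∩ A p) \ F).Finite := fun p F =>
    (((Set.finite_Iio p).image x).subset ((Set.diff_subset).trans (hstage p)))
  -- every point in some stage `A n`
  have hmemA : ∀ z : Z, ∃ n, z ∈ A n := by
    intro z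
    have : z ∈ ⋃ n, A n := hunion ▸ Set.mem_univ z
    exact Set.mem_iUnion.mp this
  -- key: every point has an open neighborhood meeting `S` in finitely many points
  have key : ∀ z : Z, ∃ V : Set Z, IsOpen V ∧ z ∈ V ∧ ∃ N, V ∩ S ⊆ x '' Set.Iio N := by
    intro z
    obtain ⟨m, hzm⟩ := hmemA z
    have hm : A m ∩ S ⊆ x '' Set.Iio m := fun s hs => hstage m ⟨hs.2, hs.1⟩
    obtain ⟨W, hW0, hWprop⟩ := aux_chain A hmono hrelT1 S (x '' Set.Iio m)
      (fun p => hfinP p _) m hm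
    have hWmono : Monotone W := monotone_nat_of_le_succ fun k => (hWprop k).2.2.1
    refine ⟨⋃ k, W k, ?_, Set.mem_iUnion.mpr ⟨0, hW0 ▸ hzm⟩, m, ?_⟩
    · rw [hfinal]
      intro p
      have hU : (⋃ k, W k) = ⋃ k, W (k + p) := by
        apply Set.Subset.antisymm
        · exact Set.iUnion_subset fun k => (hWmono (Nat.le_add_right k p)).trans
            (Set.subset_iUnion (fun k => W (k + p)) k)
        · exact Set.iUnion_subset fun k => Set.subset_iUnion W (k + p)
      rw [hU, Set.preimage_iUnion]
      refine isOpen_iUnion fun k => ?_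
      exact aux_open_of_subset (hmono ((Nat.le_add_left p k).trans
        (Nat.le_add_left (k + p) m))) (hWprop (k + p)).2.1
    · rw [Set.iUnion_inter]
      exact Set.iUnion_subset fun k => (hWprop k).2.2.2
  choose V hVo hVz N hVS using key
  obtain ⟨t, ht⟩ := hK.elim_finite_subcover V hVo
    (fun y hy => Set.mem_iUnion.mpr ⟨y, hVz y⟩)
  set N0 := t.sup N + 1 with hN0
  have hSsub : S ⊆ x '' Set.Iio N0 := by
    rintro s hs
    obtain ⟨k, rfl⟩ := hs
    obtain ⟨z, hz⟩ := Set.mem_iUnion.mp (ht (hxK k))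
    obtain ⟨hzt, hzV⟩ := Set.mem_iUnion.mp hz
    obtain ⟨j, hj, hjx⟩ := hVS z ⟨hzV, ⟨k, rfl⟩⟩
    refine ⟨j, ?_, hjx⟩
    exact lt_of_lt_of_le hj (Nat.le_succ_of_le (Finset.le_sup hzt))
  choose st hst using hmemA
  set M := (Finset.range N0).sup (fun k => st (x k)) with hM
  have hxM : x M ∈ S := ⟨M, rfl⟩
  obtain ⟨k, hk, hkx⟩ := hSsub hxM
  have : x k ∈ A M := hmono (Finset.le_sup (Finset.mem_range.mpr hk)) (hst (x k))
  rw [hkx] at this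
  exact hxA M this
end

section
/- If X × ∂Δⁿ → Y is a continuous map and Z is the pushout of X × Δⁿ ← X × ∂Δⁿ → Y in topological spaces, then the canonical map Y → Z is a relatively T1 embedding: it is a closed embedding, and for every open U ⊆ Y and every z ∈ Z ∖ U there is an open W ⊆ Z with U ⊆ W and z ∉ W. -/
open CategoryTheory Limits Topology

noncomputable section

/-- The topological simplex as in the older Mathlib (removed since). -/
def SimplexCategory.toTopObj (x : SimplexCategory) : Set (Fin (x.len + 1) → NNReal) :=
  { f | ∑ i, f i = 1 }

instance (x : SimplexCategory) : CoeFun x.toTopObj fun _ => Fin (x.len + 1) → NNReal :=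
  ⟨fun f => (f : Fin (x.len + 1) → NNReal)⟩

/-- The boundary of the topological `n`-simplex, as a subspace of
`SimplexCategory.toTopObj [n]`: the set of points with some vanishing coordinate. -/
def topSimplexBoundary (n : ℕ) : Set ((SimplexCategory.mk n).toTopObj) :=
  {p | ∃ i, p i = 0}

namespace MyPushout

universe u
variable {S A B : TopCat.{u}} (f : S ⟶ A) (g : S ⟶ B)

instance : TopologicalSpace (Types.Pushout (TypeCat.ofHom ⇑f) (TypeCat.ofHom ⇑g)) :=
  TopologicalSpace.coinduced (Quot.mk _) inferInstance

def Pt : TopCat.{u} := TopCat.of (Types.Pushout (TypeCat.ofHom ⇑f) (TypeCat.ofHom ⇑g))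

lemma continuous_quotmk : Continuous (Quot.mk _ : (↑A ⊕ ↑B) → Types.Pushout (TypeCat.ofHom ⇑f) (TypeCat.ofHom ⇑g)) :=
  continuous_coinduced_rng

def inlP : A ⟶ Pt f g :=
  TopCat.ofHom ⟨Types.Pushout.inl (TypeCat.ofHom ⇑f) (TypeCat.ofHom ⇑g), by
    have : ⇑(Types.Pushout.inl (TypeCat.ofHom ⇑f) (TypeCat.ofHom ⇑g)) = (Quot.mk _) ∘ Sum.inl := rfl
    rw [this]
    exact (continuous_quotmk f g).comp continuous_inl⟩

def inrP : B ⟶ Pt f g :=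
  TopCat.ofHom ⟨Types.Pushout.inr (TypeCat.ofHom ⇑f) (TypeCat.ofHom ⇑g), by
    have : ⇑(Types.Pushout.inr (TypeCat.ofHom ⇑f) (TypeCat.ofHom ⇑g)) = (Quot.mk _) ∘ Sum.inr := rfl
    rw [this]
    exact (continuous_quotmk f g).comp continuous_inr⟩

def coconeP : PushoutCocone f g :=
  PushoutCocone.mk (inlP f g) (inrP f g) (by
    ext s
    exact Quot.sound (Types.Pushout.Rel.inl_inr s))

def isColimitP : IsColimit (coconeP f g) := by
  refine PushoutCocone.IsColimit.mk _ (fun s => TopCat.ofHom ⟨Quot.lift (Sum.elim ⇑s.inl ⇑s.inr) ?_, ?_⟩)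
    (fun s => ?_) (fun s => ?_) (fun s m h1 h2 => ?_)
  · rintro _ _ ⟨t⟩
    exact ConcreteCategory.congr_hom s.condition t
  · refine continuous_coinduced_dom.2 ?_
    exact (s.inl.hom.continuous.sumElim s.inr.hom.continuous)
  · ext a; rfl
  · ext b; rfl
  · ext z
    obtain ⟨(a | b), rfl⟩ := Quot.exists_rep z
    · exact ConcreteCategory.congr_hom h1 a
    · exact ConcreteCategory.congr_hom h2 b

lemma isOpen_iff (W : Set (Pt f g)) :
    IsOpen W ↔ IsOpen (⇑(inlP f g) ⁻¹' W) ∧ IsOpen (⇑(inrP f g) ⁻¹' W) := by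
  constructor
  · intro hW
    exact ⟨hW.preimage (inlP f g).hom.continuous, hW.preimage (inrP f g).hom.continuous⟩
  · rintro ⟨h1, h2⟩
    change IsOpen (Quot.mk _ ⁻¹' W)
    rw [isOpen_sum_iff]
    exact ⟨h1, h2⟩

variable {f g} (hf_inj : Function.Injective ⇑f)
include hf_inj

lemma eqv (u v : ↑A ⊕ ↑B) :
    (Quot.mk _ u : Types.Pushout (TypeCat.ofHom ⇑f) (TypeCat.ofHom ⇑g)) = Quot.mk _ v ↔ Types.Pushout.Rel' (TypeCat.ofHom ⇑f) (TypeCat.ofHom ⇑g) u v := by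
  haveI : Mono (X := ↑S) (Y := ↑A) (TypeCat.ofHom ⇑f) := (mono_iff_injective _).2 hf_inj
  exact Types.Pushout.quot_mk_eq_iff (TypeCat.ofHom ⇑f) (TypeCat.ofHom ⇑g) u v

lemma inr_injective : Function.Injective ⇑(inrP f g) := by
  intro b b' h
  have := (eqv hf_inj (Sum.inr b) (Sum.inr b')).1 h
  rwa [Types.Pushout.inr_rel'_inr_iff] at this

lemma mem_inr_image_inr (C : Set B) (b : ↑B) :
    inrP f g b ∈ ⇑(inrP f g) '' C ↔ b ∈ C := by
  constructor
  · rintro ⟨b', hb', h⟩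
    rwa [← inr_injective hf_inj h]
  · exact fun h => ⟨b, h, rfl⟩

lemma mem_inr_image_inl (C : Set B) (a : ↑A) :
    inlP f g a ∈ ⇑(inrP f g) '' C ↔ ∃ s, f s = a ∧ g s ∈ C := by
  constructor
  · rintro ⟨b', hb', h⟩
    have := (eqv hf_inj (Sum.inr b') (Sum.inl a)).1 h
    cases this with
    | inr_inl s => exact ⟨s, rfl, hb'⟩
  · rintro ⟨s, rfl, hs⟩
    exact ⟨g s, hs, (Quot.sound (Types.Pushout.Rel.inl_inr s)).symm⟩

lemma mem_inl_image_inl (V' : Set A) (a : ↑A) :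
    inlP f g a ∈ ⇑(inlP f g) '' V' ↔
      a ∈ V' ∨ ∃ x₀ y₀, g x₀ = g y₀ ∧ a = f x₀ ∧ f y₀ ∈ V' := by
  constructor
  · rintro ⟨a', ha', h⟩
    have := (eqv hf_inj (Sum.inl a') (Sum.inl a)).1 h
    rw [Types.Pushout.inl_rel'_inl_iff] at this
    rcases this with rfl | ⟨x₀, y₀, hg, h1, h2⟩
    · exact Or.inl ha'
    · exact Or.inr ⟨y₀, x₀, hg.symm, h2, h1 ▸ ha'⟩
  · rintro (h | ⟨x₀, y₀, hg, rfl, h⟩)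
    · exact ⟨a, h, rfl⟩
    · refine ⟨f y₀, h, ?_⟩
      exact (eqv hf_inj _ _).2 (Types.Pushout.Rel'.inl_inl y₀ x₀ hg.symm)

lemma mem_inl_image_inr (V' : Set A) (b : ↑B) :
    inrP f g b ∈ ⇑(inlP f g) '' V' ↔ ∃ s, g s = b ∧ f s ∈ V' := by
  constructor
  · rintro ⟨a', ha', h⟩
    have := (eqv hf_inj (Sum.inl a') (Sum.inr b)).1 h
    rw [Types.Pushout.inl_rel'_inr_iff] at this
    obtain ⟨s, h1, rfl⟩ := this
    exact ⟨s, rfl, h1 ▸ ha'⟩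
  · rintro ⟨s, rfl, hs⟩
    exact ⟨f s, hs, Quot.sound (Types.Pushout.Rel.inl_inr s)⟩

lemma preimage_W (U : Set ↑B) (V' : Set ↑A) (hpre : ⇑f ⁻¹' V' = ⇑g ⁻¹' U) :
    ⇑(inlP f g) ⁻¹' (⇑(inlP f g) '' V' ∪ ⇑(inrP f g) '' U) = V' ∧
      ⇑(inrP f g) ⁻¹' (⇑(inlP f g) '' V' ∪ ⇑(inrP f g) '' U) = U := by
  constructor
  · ext a
    simp only [Set.mem_preimage, Set.mem_union, mem_inl_image_inl hf_inj,
      mem_inr_image_inl hf_inj]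
    constructor
    · rintro ((h | ⟨x₀, y₀, hg, rfl, h⟩) | ⟨s, rfl, hs⟩)
      · exact h
      · have : y₀ ∈ ⇑g ⁻¹' U := by rw [← hpre]; exact h
        have hx : x₀ ∈ ⇑f ⁻¹' V' := by
          rw [hpre]; simpa only [Set.mem_preimage, hg] using this
        exact hx
      · have : s ∈ ⇑f ⁻¹' V' := by rw [hpre]; exact hs
        exact this
    · exact fun h => Or.inl (Or.inl h)
  · ext b
    simp only [Set.mem_preimage, Set.mem_union, mem_inl_image_inr hf_inj,
      mem_inr_image_inr hf_inj]
    constructor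
    · rintro (⟨s, rfl, hs⟩ | h)
      · have : s ∈ ⇑g ⁻¹' U := by rw [← hpre]; exact hs
        exact this
      · exact h
    · exact fun h => Or.inr h

omit hf_inj

theorem model (hf : IsClosedEmbedding ⇑f)
    (hT1 : ∀ V : Set ↑S, IsOpen V → ∀ a : ↑A, a ∉ ⇑f '' V →
      ∃ V' : Set ↑A, IsOpen V' ∧ ⇑f ⁻¹' V' = V ∧ a ∉ V') :
    IsClosedEmbedding ⇑(inrP f g) ∧
      ∀ U : Set ↑B, IsOpen U → ∀ z : Pt f g, z ∉ ⇑(inrP f g) '' U →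
        ∃ W : Set (Pt f g), IsOpen W ∧ ⇑(inrP f g) '' U ⊆ W ∧ z ∉ W := by
  have hf_inj := hf.injective
  constructor
  · refine IsClosedEmbedding.of_continuous_injective_isClosedMap
      (inrP f g).hom.continuous (inr_injective hf_inj) ?_
    intro C hC
    rw [← isOpen_compl_iff, isOpen_iff]
    constructor
    · rw [Set.preimage_compl]
      have : ⇑(inlP f g) ⁻¹' (⇑(inrP f g) '' C) = ⇑f '' (⇑g ⁻¹' C) := by
        ext a
        simp only [Set.mem_preimage, mem_inr_image_inl hf_inj, Set.mem_image]
        exact ⟨fun ⟨s, h1, h2⟩ => ⟨s, h2, h1⟩, fun ⟨s, h1, h2⟩ => ⟨s, h2, h1⟩⟩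
      rw [this]
      exact (hf.isClosedMap _ (hC.preimage g.hom.continuous)).isOpen_compl
    · rw [Set.preimage_compl]
      have : ⇑(inrP f g) ⁻¹' (⇑(inrP f g) '' C) = C := by
        ext b
        exact mem_inr_image_inr hf_inj C b
      rw [this]
      exact hC.isOpen_compl
  · intro U hU z hz
    obtain ⟨u, rfl⟩ := Quot.exists_rep z
    rcases u with a | b
    · have hza : (Quot.mk _ (Sum.inl a) : Pt f g) = inlP f g a := rfl
      have ha : a ∉ ⇑f '' (⇑g ⁻¹' U) := by
        rintro ⟨s, hs, rfl⟩
        apply hz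
        refine ⟨g s, hs, ?_⟩
        exact (Quot.sound (Types.Pushout.Rel.inl_inr s)).symm
      obtain ⟨V', hV', hpre, haV'⟩ := hT1 _ (hU.preimage g.hom.continuous) a ha
      obtain ⟨e1, e2⟩ := preimage_W hf_inj U V' hpre
      refine ⟨⇑(inlP f g) '' V' ∪ ⇑(inrP f g) '' U, ?_, Set.subset_union_right, ?_⟩
      · rw [isOpen_iff, e1, e2]; exact ⟨hV', hU⟩
      · intro hmem
        rw [hza] at hmem
        have : a ∈ ⇑(inlP f g) ⁻¹' (⇑(inlP f g) '' V' ∪ ⇑(inrP f g) '' U) := hmem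
        rw [e1] at this
        exact haV' this
    · have hzb : (Quot.mk _ (Sum.inr b) : Pt f g) = inrP f g b := rfl
      have hb : b ∉ U := fun h => hz ⟨b, h, rfl⟩
      obtain ⟨V', hV', hpre⟩ := hf.isInducing.isOpen_iff.1 (hU.preimage g.hom.continuous)
      obtain ⟨e1, e2⟩ := preimage_W hf_inj U V' hpre
      refine ⟨⇑(inlP f g) '' V' ∪ ⇑(inrP f g) '' U, ?_, Set.subset_union_right, ?_⟩
      · rw [isOpen_iff, e1, e2]; exact ⟨hV', hU⟩
      · intro hmem
        rw [hzb] at hmem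
        have : b ∈ ⇑(inrP f g) ⁻¹' (⇑(inlP f g) '' V' ∪ ⇑(inrP f g) '' U) := hmem
        rw [e2] at this
        exact hb this

variable (f g)

def isoP : (pushout f g : TopCat.{u}) ≅ Pt f g :=
  (colimit.isColimit (span f g)).coconePointUniqueUpToIso (isColimitP f g)

lemma inr_compat : pushout.inr f g ≫ (isoP f g).hom = inrP f g := by
  have := (colimit.isColimit (span f g)).comp_coconePointUniqueUpToIso_hom
    (isColimitP f g) WalkingSpan.right
  exact this

theorem key (hf : IsClosedEmbedding ⇑f)
    (hT1 : ∀ V : Set ↑S, IsOpen V → ∀ a : ↑A, a ∉ ⇑f '' V →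
      ∃ V' : Set ↑A, IsOpen V' ∧ ⇑f ⁻¹' V' = V ∧ a ∉ V') :
    IsClosedEmbedding ⇑(pushout.inr f g) ∧
      ∀ U : Set ↑B, IsOpen U → ∀ z : (pushout f g : TopCat.{u}),
        z ∉ ⇑(pushout.inr f g) '' U →
          ∃ W : Set (pushout f g : TopCat.{u}), IsOpen W ∧ ⇑(pushout.inr f g) '' U ⊆ W ∧ z ∉ W := by
  obtain ⟨h1, h2⟩ := model (f := f) (g := g) hf hT1
  have hcompat : ∀ b : ↑B, (isoP f g).hom (pushout.inr f g b) = inrP f g b := by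
    intro b
    exact ConcreteCategory.congr_hom (inr_compat f g) b
  have e : ⇑(pushout.inr f g) = ⇑(isoP f g).inv ∘ ⇑(inrP f g) := by
    funext b
    rw [Function.comp_apply, ← hcompat b]
    exact (TopCat.hom_inv_id_apply ((isoP f g)) _).symm
  constructor
  · rw [e]
    exact (TopCat.homeoOfIso (isoP f g)).symm.isClosedEmbedding.comp h1
  · intro U hU z hz
    have hz' : (isoP f g).hom z ∉ ⇑(inrP f g) '' U := by
      rintro ⟨b, hb, hbz⟩
      apply hz
      refine ⟨b, hb, ?_⟩
      have := congrArg (⇑(isoP f g).inv) hbz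
      rw [TopCat.hom_inv_id_apply] at this
      rw [← this, e, Function.comp_apply]
    obtain ⟨W₀, hW₀, hsub, hznot⟩ := h2 U hU ((isoP f g).hom z) hz'
    refine ⟨⇑(isoP f g).hom ⁻¹' W₀, hW₀.preimage (isoP f g).hom.hom.continuous, ?_, ?_⟩
    · rintro _ ⟨b, hb, rfl⟩
      have : (isoP f g).hom (pushout.inr f g b) ∈ W₀ := by
        rw [hcompat b]; exact hsub ⟨b, hb, rfl⟩
      exact this
    · exact hznot

end MyPushout

section MainAux

variable (n : ℕ)

lemma continuous_coord (i : Fin (n+1)) :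
    Continuous fun p : (SimplexCategory.mk n).toTopObj => p.1 i :=
  (continuous_apply i).comp continuous_subtype_val

lemma isClosed_topSimplexBoundary : IsClosed (topSimplexBoundary n) := by
  have : topSimplexBoundary n = ⋃ i : Fin (n+1),
      {p : (SimplexCategory.mk n).toTopObj | p.1 i = 0} := by
    ext p
    constructor
    · rintro ⟨i, h⟩; exact Set.mem_iUnion.2 ⟨i, h⟩
    · intro h; obtain ⟨i, h⟩ := Set.mem_iUnion.1 h; exact ⟨i, h⟩
  rw [this]
  exact isClosed_iUnion_of_finite fun i =>
    isClosed_singleton.preimage (continuous_coord n i)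

variable (X : TopCat)

lemma closedEmbedding_e :
    IsClosedEmbedding (fun q : X × (topSimplexBoundary n : Set _) =>
      ((q.1, q.2.1) : X × (SimplexCategory.mk n).toTopObj)) := by
  have heq : (fun q : X × (topSimplexBoundary n : Set _) =>
      ((q.1, q.2.1) : X × (SimplexCategory.mk n).toTopObj)) =
      Prod.map id Subtype.val := rfl
  rw [heq]
  refine ⟨IsEmbedding.prodMap IsEmbedding.id IsEmbedding.subtypeVal, ?_⟩
  rw [Set.range_prodMap, Subtype.range_coe_subtype, Set.range_id]
  exact isClosed_univ.prod (isClosed_topSimplexBoundary n)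

def phi : X × (SimplexCategory.mk n).toTopObj → NNReal := fun a => ∏ i : Fin (n+1), a.2.1 i

lemma continuous_phi : Continuous (phi n X) :=
  continuous_finset_prod _ fun i _ => (continuous_coord n i).comp continuous_snd

lemma phi_eq_zero_iff (a : X × (SimplexCategory.mk n).toTopObj) :
    phi n X a = 0 ↔ a.2 ∈ topSimplexBoundary n := by
  rw [phi, Finset.prod_eq_zero_iff]
  constructor
  · rintro ⟨i, -, h⟩; exact ⟨i, h⟩
  · rintro ⟨i, h⟩; exact ⟨i, Finset.mem_univ i, h⟩

end MainAux

/-- If `X × ∂Δⁿ → Y` is a continuous map and `Z` is the pushout of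
`X × Δⁿ ← X × ∂Δⁿ → Y` in topological spaces, then the canonical map `Y → Z` is a
relatively T1 embedding: it is a closed embedding, and for every open `U ⊆ Y` and every
`z ∈ Z` not in the image of `U` there is an open `W ⊆ Z` containing the image of `U` but
not `z`. -/
theorem pushout_inr_closedEmbedding_and_relativelyT1 (n : ℕ) (X Y : TopCat)
    (ι : TopCat.of (X × (topSimplexBoundary n : Set _)) ⟶
      TopCat.of (X × (SimplexCategory.mk n).toTopObj))
    (hι : ∀ q : X × (topSimplexBoundary n : Set _), ι q = ((q.1, q.2.1) : X × (SimplexCategory.mk n).toTopObj))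
    (g : TopCat.of (X × (topSimplexBoundary n : Set _)) ⟶ Y) :
    IsClosedEmbedding (⇑(pushout.inr ι g)) ∧
      ∀ U : Set Y, IsOpen U →
        ∀ z : (pushout ι g : TopCat), z ∉ ⇑(pushout.inr ι g) '' U →
          ∃ W : Set (pushout ι g : TopCat),
            IsOpen W ∧ ⇑(pushout.inr ι g) '' U ⊆ W ∧ z ∉ W := by
  have hcoe : ⇑ι = fun q : X × (topSimplexBoundary n : Set _) =>
      ((q.1, q.2.1) : X × (SimplexCategory.mk n).toTopObj) := funext hι
  have hf : IsClosedEmbedding ⇑ι := by rw [hcoe]; exact closedEmbedding_e n X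
  refine MyPushout.key ι g hf ?_
  intro V hV a ha
  obtain ⟨V₀, hV₀, hpre⟩ := hf.isInducing.isOpen_iff.1 hV
  by_cases hφ : phi n X a = 0
  · -- a is in the image of ι
    have hb : a.2 ∈ topSimplexBoundary n := (phi_eq_zero_iff n X a).1 hφ
    refine ⟨V₀, hV₀, hpre, fun haV₀ => ?_⟩
    apply ha
    refine ⟨(a.1, ⟨a.2, hb⟩), ?_, ?_⟩
    · rw [← hpre]
      show ι _ ∈ V₀
      rw [hι]
      exact haV₀
    · rw [hι]
  · refine ⟨V₀ ∩ phi n X ⁻¹' Set.Iio (phi n X a),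
      hV₀.inter (isOpen_Iio.preimage (continuous_phi n X)), ?_, ?_⟩
    · rw [Set.preimage_inter, hpre]
      have : ⇑ι ⁻¹' (phi n X ⁻¹' Set.Iio (phi n X a)) = Set.univ := by
        ext s
        simp only [Set.mem_preimage, Set.mem_Iio, Set.mem_univ, iff_true]
        have h0 : phi n X (ι s) = 0 := by
          rw [phi_eq_zero_iff, hι]
          exact s.2.2
        rw [h0]
        exact pos_iff_ne_zero.2 hφ
      rw [this, Set.inter_univ]
    · rintro ⟨-, h2⟩
      have h3 : phi n X a < phi n X a := h2
      exact lt_irrefl _ h3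


end
end
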